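/- In Fibonacci Nim, a starting pile of n stones is a losing position for the first player (under optimal play) if and only if n is a Fibonacci number. -/

import Mathlib

/-- Fibonacci numbers with the indexing `F₁ = 1`, `F₂ = 2`, `Fₙ = Fₙ₋₁ + Fₙ₋₂`. -/
def Fib (k : ℕ) : ℕ := Nat.fib (k + 1)

/-- Losing positions of Fibonacci Nim: a state is `(remaining stones, current
maximum allowed removal)`; a move takes `m` stones with `1 ≤ m ≤ min q n`, after
which the opponent may take at most `2m`. Under normal play the player who takes
the last stone wins, so a player facing `0` stones loses. -/
def FibNimLosing : ℕ × ℕ → Prop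
  | (n, q) => ∀ m, 1 ≤ m → m ≤ q → m ≤ n → ¬ FibNimLosing (n - m, 2 * m)
  termination_by p => p.1
  decreasing_by omega

/-- smallest Zeckendorf summand -/
def zfn (n : ℕ) : ℕ :=
  if h : n = 0 then 0
  else if Nat.fib (Nat.greatestFib n) = n then n
  else zfn (n - Nat.fib (Nat.greatestFib n))
termination_by n
decreasing_by
  have h1 : 0 < Nat.fib (Nat.greatestFib n) := Nat.fib_pos.2 (Nat.greatestFib_pos.2 (Nat.pos_of_ne_zero h))
  omega

lemma zfn_le : ∀ n, zfn n ≤ n := by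
  intro n
  induction n using Nat.strong_induction_on with
  | _ n ih =>
    rw [zfn]
    split
    · omega
    · split
      · omega
      · rename_i h _
        have h1 : 0 < Nat.fib (Nat.greatestFib n) := Nat.fib_pos.2 (Nat.greatestFib_pos.2 (Nat.pos_of_ne_zero h))
        have := ih (n - Nat.fib (Nat.greatestFib n)) (by omega)
        omega

lemma zfn_pos {n : ℕ} (hn : 0 < n) : 0 < zfn n := by
  induction n using Nat.strong_induction_on with
  | _ n ih =>
    rw [zfn]
    split
    · omega
    · split
      · omega
      · rename_i h h2
        have h1 : 0 < Nat.fib (Nat.greatestFib n) := Nat.fib_pos.2 (Nat.greatestFib_pos.2 (Nat.pos_of_ne_zero h))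
        have h3 := Nat.fib_greatestFib_le n
        exact ih _ (by omega) (by omega)

lemma zfn_of_fib {n : ℕ} (hn : 0 < n) (h : ∃ k, Nat.fib k = n) : zfn n = n := by
  obtain ⟨k, hk⟩ := h
  have h1 : Nat.fib (Nat.greatestFib n) = n := by
    have h2 : k ≤ Nat.greatestFib n := Nat.le_greatestFib.2 (by omega)
    have h3 : Nat.fib k ≤ Nat.fib (Nat.greatestFib n) := Nat.fib_mono h2
    have h4 := Nat.fib_greatestFib_le n
    omega
  rw [zfn]
  rw [dif_neg hn.ne', if_pos h1]

lemma zfn_lt_of_not_fib {n : ℕ} (hn : 0 < n) (h : ¬ ∃ k, Nat.fib k = n) : zfn n < n := by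
  have h1 : Nat.fib (Nat.greatestFib n) ≠ n := fun he => h ⟨_, he⟩
  have h2 : 0 < Nat.fib (Nat.greatestFib n) := Nat.fib_pos.2 (Nat.greatestFib_pos.2 hn)
  rw [zfn]
  rw [dif_neg hn.ne', if_neg h1]
  have := zfn_le (n - Nat.fib (Nat.greatestFib n))
  have := Nat.fib_greatestFib_le n
  omega

lemma fib_of_zfn_eq {n : ℕ} (hn : 0 < n) (h : zfn n = n) : ∃ k, Nat.fib k = n := by
  by_contra hc
  have := zfn_lt_of_not_fib hn hc
  omega

lemma greatestFib_eq {K x : ℕ} (h1 : Nat.fib K ≤ x) (h2 : x < Nat.fib (K + 1)) :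
    Nat.greatestFib x = K := by
  have hg : K ≤ Nat.greatestFib x := Nat.le_greatestFib.2 h1
  by_contra hne
  have hgt : K + 1 ≤ Nat.greatestFib x := by omega
  have := Nat.fib_mono hgt
  have := Nat.fib_greatestFib_le x
  omega

lemma zfn_step {n : ℕ} (hn : 0 < n) (h : Nat.fib (Nat.greatestFib n) ≠ n) :
    zfn n = zfn (n - Nat.fib (Nat.greatestFib n)) := by
  rw [zfn, dif_neg hn.ne', if_neg h]

/-- the two key inequalities -/
lemma zfn_key : ∀ n : ℕ,
    (∀ m, 0 < m → m < zfn n → zfn (n - m) ≤ 2 * m) ∧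
    (0 < n → zfn n < n → 2 * zfn n < zfn (n - zfn n)) := by
  intro n
  induction n using Nat.strong_induction_on with
  | _ n ih =>
    rcases Nat.eq_zero_or_pos n with rfl | hn
    · refine ⟨fun m hm hmz => ?_, by omega⟩
      have : zfn 0 = 0 := by rw [zfn]; simp
      omega
    set K := Nat.greatestFib n with hK
    have hK2 : 2 ≤ K := Nat.le_greatestFib.2 (by simp; omega)
    have hFle : Nat.fib K ≤ n := Nat.fib_greatestFib_le n
    have hlt : n < Nat.fib (K + 1) := Nat.lt_fib_greatestFib_add_one n
    by_cases hfib : Nat.fib K = n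
    · -- n is Fibonacci; zfn n = n
      have hz : zfn n = n := zfn_of_fib hn ⟨K, hfib⟩
      refine ⟨fun m hm hmz => ?_, by omega⟩
      rw [hz] at hmz
      -- n = fib K, 0 < m < n
      rcases Nat.lt_or_ge n 2 with h2 | h2
      · omega
      have hK3 : 3 ≤ K := by
        by_contra hc
        have h5 : Nat.fib K ≤ Nat.fib 2 := Nat.fib_mono (by omega)
        rw [Nat.fib_two] at h5
        omega
      have hsplit : Nat.fib K = Nat.fib (K - 2) + Nat.fib (K - 1) := by
        have h5 : Nat.fib (K - 2 + 2) = Nat.fib (K - 2) + Nat.fib (K - 2 + 1) := Nat.fib_add_two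
        rw [show K - 2 + 2 = K by omega, show K - 2 + 1 = K - 1 by omega] at h5
        exact h5
      have hsplit2 : Nat.fib (K - 1) = Nat.fib (K - 3) + Nat.fib (K - 2) := by
        have h5 : Nat.fib (K - 3 + 2) = Nat.fib (K - 3) + Nat.fib (K - 3 + 1) := Nat.fib_add_two
        rw [show K - 3 + 2 = K - 1 by omega, show K - 3 + 1 = K - 2 by omega] at h5
        exact h5
      have hmono : Nat.fib (K - 3) ≤ Nat.fib (K - 2) := Nat.fib_mono (by omega)
      rcases Nat.lt_or_ge m (Nat.fib (K - 2)) with hmb | hmb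
      · -- m < fib (K-2) : zfn (n - m) = zfn (fib (K-2) - m) ≤ 2m by IH
        have hbpos : 0 < Nat.fib (K - 2) := by omega
        have hg : Nat.greatestFib (n - m) = K - 1 :=
          greatestFib_eq (by omega) (by rw [show K - 1 + 1 = K by omega]; omega)
        have hne : Nat.fib (Nat.greatestFib (n - m)) ≠ n - m := by rw [hg]; omega
        have hstep : zfn (n - m) = zfn (Nat.fib (K - 2) - m) := by
          rw [zfn_step (by omega) hne, hg]
          congr 1
          omega
        have hzb : zfn (Nat.fib (K - 2)) = Nat.fib (K - 2) := zfn_of_fib hbpos ⟨K - 2, rfl⟩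
        have hihb := (ih (Nat.fib (K - 2)) (by omega)).1 m hm (by omega)
        rw [hstep]
        omega
      · -- m ≥ fib (K-2)
        have := zfn_le (n - m)
        omega
    · -- n not Fibonacci at top: zfn n = zfn r, r = n - fib K
      set r := n - Nat.fib K with hr
      have hFpos : 0 < Nat.fib K := Nat.fib_pos.2 (by omega)
      have hrpos : 0 < r := by omega
      have hrlt : r < n := by omega
      have hstep : zfn n = zfn r := zfn_step hn hfib
      have hfibsplit : Nat.fib (K + 1) = Nat.fib (K - 1) + Nat.fib K := by
        have : Nat.fib (K - 1 + 2) = Nat.fib (K - 1) + Nat.fib (K - 1 + 1) := Nat.fib_add_two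
        have he : K - 1 + 2 = K + 1 := by omega
        have he2 : K - 1 + 1 = K := by omega
        rw [he, he2] at this
        exact this
      have hrbound : r < Nat.fib (K - 1) := by omega
      have hzr_le := zfn_le r
      have hzr_pos := zfn_pos hrpos
      constructor
      · intro m hm hmz
        rw [hstep] at hmz
        -- n - m = fib K + (r - m), greatest fib still K
        have hg : Nat.greatestFib (n - m) = K := by
          apply greatestFib_eq <;> omega
        have hne : Nat.fib (Nat.greatestFib (n - m)) ≠ n - m := by rw [hg]; omega
        have hstep2 : zfn (n - m) = zfn (r - m) := by
          rw [zfn_step (by omega) hne, hg]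
          congr 1
          omega
        have hih := (ih r hrlt).1 m hm hmz
        rw [hstep2]
        omega
      · intro _ _
        rw [hstep]
        rcases Nat.lt_or_ge (zfn r) r with hzlt | hzge
        · -- zfn r < r : reduce to IH (4) at r
          have hg : Nat.greatestFib (n - zfn r) = K := by
            apply greatestFib_eq <;> omega
          have hne : Nat.fib (Nat.greatestFib (n - zfn r)) ≠ n - zfn r := by rw [hg]; omega
          have hstep2 : zfn (n - zfn r) = zfn (r - zfn r) := by
            rw [zfn_step (by omega) hne, hg]
            congr 1
            omega
          have hih := (ih r hrlt).2 hrpos hzlt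
          rw [hstep2]
          omega
        · -- zfn r = r : r is Fibonacci, n - r = fib K, show 2r < fib K
          have hzr : zfn r = r := by omega
          obtain ⟨j, hj⟩ := fib_of_zfn_eq hrpos hzr
          have hnr : n - zfn r = Nat.fib K := by omega
          have hzF : zfn (n - zfn r) = Nat.fib K := by
            rw [hnr]; exact zfn_of_fib hFpos ⟨K, rfl⟩
          -- need 2 * r < fib K
          have hK4 : 4 ≤ K := by
            by_contra hc
            have h5 : Nat.fib (K - 1) ≤ Nat.fib 2 := Nat.fib_mono (by omega)
            rw [Nat.fib_two] at h5
            omega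
          have hjle : j ≤ K - 2 := by
            by_contra hc
            have : Nat.fib (K - 1) ≤ Nat.fib j := Nat.fib_mono (by omega)
            omega
          have h1 : Nat.fib j ≤ Nat.fib (K - 2) := Nat.fib_mono hjle
          have h2 : Nat.fib (K - 2) < Nat.fib (K - 1) := by
            have := Nat.fib_lt_fib_succ (n := K - 2) (by omega)
            have he : K - 2 + 1 = K - 1 := by omega
            rwa [he] at this
          have h3 : Nat.fib K = Nat.fib (K - 2) + Nat.fib (K - 1) := by
            have : Nat.fib (K - 2 + 2) = Nat.fib (K - 2) + Nat.fib (K - 2 + 1) := Nat.fib_add_two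
            have he : K - 2 + 2 = K := by omega
            have he2 : K - 2 + 1 = K - 1 := by omega
            rw [he, he2] at this
            exact this
          rw [hzF, hzr]
          omega

lemma losing_zero (q : ℕ) : FibNimLosing (0, q) := by
  rw [FibNimLosing]
  intro m h1 _ h3
  omega

lemma losing_iff : ∀ n : ℕ, 0 < n → ∀ q : ℕ, (FibNimLosing (n, q) ↔ q < zfn n) := by
  intro n
  induction n using Nat.strong_induction_on with
  | _ n ih =>
    intro hn q
    constructor
    · -- losing → q < zfn n (contrapositive)
      intro hL
      by_contra hq
      push_neg at hq  -- zfn n ≤ q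
      have hzpos := zfn_pos hn
      have hzle := zfn_le n
      rw [FibNimLosing] at hL
      refine hL (zfn n) hzpos hq hzle ?_
      rcases Nat.eq_or_lt_of_le hzle with heq | hlt
      · rw [show n - zfn n = 0 by omega]
        exact losing_zero _
      · rw [ih (n - zfn n) (by omega) (by omega)]
        exact (zfn_key n).2 hn hlt
    · intro hq
      have hzle := zfn_le n
      rw [FibNimLosing]
      intro m h1 h2 _ hL
      have hmn : m < n := by omega
      rw [ih (n - m) (by omega) (by omega)] at hL
      have := (zfn_key n).1 m h1 (by omega)
      omega

/-- Fibonacci Nim: a starting pile of `n ≥ 2` stones (first player may take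
between `1` and `n - 1` stones) is a losing position for the first player iff
`n` is a Fibonacci number. -/
theorem fibNim_losing_iff_fib (n : ℕ) (hn : 2 ≤ n) :
    FibNimLosing (n, n - 1) ↔ ∃ k, 1 ≤ k ∧ n = Fib k := by
  simp only [Fib]
  rw [losing_iff n (by omega) (n - 1)]
  have hzle := zfn_le n
  constructor
  · intro h
    have hz : zfn n = n := by omega
    obtain ⟨j, hj⟩ := fib_of_zfn_eq (by omega) hz
    have hj3 : 3 ≤ j := by
      by_contra hc
      have h5 : Nat.fib j ≤ Nat.fib 2 := Nat.fib_mono (by omega)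
      rw [Nat.fib_two] at h5
      omega
    exact ⟨j - 1, by omega, by rw [show j - 1 + 1 = j by omega]; omega⟩
  · rintro ⟨k, hk1, rfl⟩
    have := zfn_of_fib (by omega) ⟨k + 1, rfl⟩
    omega
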